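/- Let G be a topological group, H ≤ G a closed subgroup, and N ⊴ G a closed normal subgroup. Suppose that for every closed subset F ⊆ H that is invariant under right multiplication by H ∩ N, the product set FN is closed in G. Then the canonical continuous group homomorphism H/(H ∩ N) → (closure of HN)/N is a topological group isomorphism (a homeomorphic isomorphism). -/

import Mathlib

open Pointwise

/-- If for every closed subset `F ⊆ H` invariant under right multiplication by `H ∩ N`
the product `F * N` is closed, then the canonical map `H/(H ∩ N) → cl(HN)/N`
is a topological group isomorphism. -/
theorem second_iso_topological_of_closed_products
    {G : Type*} [Group G] [TopologicalSpace G] [IsTopologicalGroup G]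
    [LocallyCompactSpace G] [T2Space G]
    (H N : Subgroup G) [N.Normal] (hH : IsClosed (H : Set G)) (hN : IsClosed (N : Set G))
    (hcl : ∀ F : Set G, F ⊆ (H : Set G) → IsClosed F →
      (∀ f ∈ F, ∀ n ∈ H ⊓ N, f * n ∈ F) → IsClosed (F * (N : Set G))) :
    ∃ φ : (H ⧸ N.subgroupOf H) ≃*
        ((H ⊔ N).topologicalClosure ⧸ N.subgroupOf (H ⊔ N).topologicalClosure),
      Continuous φ ∧ Continuous φ.symm ∧
        ∀ h : H, φ (QuotientGroup.mk h) =
          QuotientGroup.mk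
            (⟨(h : G), (H ⊔ N).le_topologicalClosure (Subgroup.mem_sup_left h.2)⟩ :
              (H ⊔ N).topologicalClosure) := by
  classical
  set K := (H ⊔ N).topologicalClosure with hKdef
  have hmulN : ((H ⊔ N : Subgroup G) : Set G) = (H : Set G) * N := Subgroup.mul_normal H N
  have hHNclosed : IsClosed ((H ⊔ N : Subgroup G) : Set G) := by
    rw [hmulN]
    exact hcl H le_rfl hH (fun f hf n hn => H.mul_mem hf (Subgroup.mem_inf.mp hn).1)
  have hKeq : (K : Set G) = ((H ⊔ N : Subgroup G) : Set G) := by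
    simpa [hKdef, Subgroup.topologicalClosure] using hHNclosed.closure_eq
  have hmem : ∀ h : H, (h : G) ∈ K := fun h =>
    (H ⊔ N).le_topologicalClosure (Subgroup.mem_sup_left h.2)
  let ι : H →* K :=
    { toFun := fun h => ⟨(h : G), hmem h⟩
      map_one' := rfl
      map_mul' := fun _ _ => rfl }
  have hιcont : Continuous ι := continuous_subtype_val.subtype_mk _
  let ψ : H →* K ⧸ N.subgroupOf K := (QuotientGroup.mk' _).comp ι
  have hψcont : Continuous ψ := continuous_quotient_mk'.comp hιcont
  have hker : N.subgroupOf H ≤ ψ.ker := by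
    intro h hh
    have : ((ι h : K) : G) ∈ N := hh
    simpa [ψ, MonoidHom.mem_ker, QuotientGroup.eq_one_iff, Subgroup.mem_subgroupOf] using this
  let φ₀ : (H ⧸ N.subgroupOf H) →* K ⧸ N.subgroupOf K := QuotientGroup.lift _ ψ hker
  have hφ₀mk : ∀ h : H, φ₀ (QuotientGroup.mk h) = QuotientGroup.mk (ι h) := fun _ => rfl
  have hinj : Function.Injective φ₀ := by
    intro x y
    refine QuotientGroup.induction_on x fun a => QuotientGroup.induction_on y fun b hab => ?_
    rw [hφ₀mk, hφ₀mk, QuotientGroup.eq] at hab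
    have hab' : ((a : G)⁻¹ * b) ∈ N := hab
    exact (QuotientGroup.eq).mpr (by
      show ((a : H)⁻¹ * b : H) ∈ N.subgroupOf H
      exact hab')
  have hsurj : Function.Surjective φ₀ := by
    intro z
    refine QuotientGroup.induction_on z fun k => ?_
    have hk : (k : G) ∈ (H : Set G) * N := by
      rw [← hmulN, ← hKeq]; exact k.2
    obtain ⟨h, hh, n, hn, hhn⟩ := hk
    refine ⟨QuotientGroup.mk (⟨h, hh⟩ : H), ?_⟩
    rw [hφ₀mk, QuotientGroup.eq]
    show ((ι ⟨h, hh⟩ : K) : G)⁻¹ * k ∈ N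
    have : ((ι ⟨h, hh⟩ : K) : G)⁻¹ * k = n := by
      simp only [ι, MonoidHom.coe_mk, OneHom.coe_mk]
      rw [← hhn]; group
    rw [this]; exact hn
  let φ := MulEquiv.ofBijective φ₀ ⟨hinj, hsurj⟩
  have hqmH : Topology.IsQuotientMap (QuotientGroup.mk : H → H ⧸ N.subgroupOf H) :=
    isQuotientMap_quot_mk
  have hqmK : Topology.IsQuotientMap (QuotientGroup.mk : K → K ⧸ N.subgroupOf K) :=
    isQuotientMap_quot_mk
  have hφ₀cont : Continuous φ₀ := hqmH.continuous_iff.mpr hψcont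
  -- φ₀ is a closed map
  have hclosedmap : ∀ C : Set (H ⧸ N.subgroupOf H), IsClosed C → IsClosed (φ₀ '' C) := by
    intro C hC
    set F' : Set H := QuotientGroup.mk ⁻¹' C with hF'
    have hF'closed : IsClosed F' := hC.preimage continuous_quotient_mk'
    set F : Set G := Subtype.val '' F' with hFdef
    have hFsub : F ⊆ (H : Set G) := by
      rintro _ ⟨h, _, rfl⟩; exact h.2
    have hFclosed : IsClosed F := hH.isClosedEmbedding_subtypeVal.isClosedMap _ hF'closed
    have hFinv : ∀ f ∈ F, ∀ n ∈ H ⊓ N, f * n ∈ F := by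
      rintro _ ⟨h, hh, rfl⟩ n hn
      refine ⟨h * ⟨n, (Subgroup.mem_inf.mp hn).1⟩, ?_, rfl⟩
      have : (QuotientGroup.mk (h * ⟨n, (Subgroup.mem_inf.mp hn).1⟩) :
          H ⧸ N.subgroupOf H) = QuotientGroup.mk h := by
        rw [QuotientGroup.eq]
        show ((h * ⟨n, _⟩ : H) : G)⁻¹ * h ∈ N
        have : ((h * ⟨n, (Subgroup.mem_inf.mp hn).1⟩ : H) : G)⁻¹ * h = n⁻¹ := by
          push_cast; group
        rw [this]; exact N.inv_mem (Subgroup.mem_inf.mp hn).2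
      show QuotientGroup.mk (h * ⟨n, _⟩) ∈ C
      rw [this]; exact hh
    have hFN : IsClosed (F * (N : Set G)) := hcl F hFsub hFclosed hFinv
    rw [← hqmK.isClosed_preimage]
    have hpre : (QuotientGroup.mk : K → K ⧸ N.subgroupOf K) ⁻¹' (φ₀ '' C) =
        Subtype.val ⁻¹' (F * (N : Set G)) := by
      ext k
      constructor
      · rintro ⟨c, hc, hck⟩
        obtain ⟨h, rfl⟩ := QuotientGroup.mk_surjective c
        rw [hφ₀mk, QuotientGroup.eq] at hck
        have hck' : ((h : G))⁻¹ * k ∈ N := hck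
        refine ⟨h, ⟨h, hc, rfl⟩, (h : G)⁻¹ * k, hck', by group⟩
      · rintro ⟨_, ⟨h, hh, rfl⟩, n, hn, hhn⟩
        refine ⟨QuotientGroup.mk h, hh, ?_⟩
        rw [hφ₀mk, QuotientGroup.eq]
        show ((ι h : K) : G)⁻¹ * k ∈ N
        have : ((ι h : K) : G)⁻¹ * k = n := by
          simp only [ι, MonoidHom.coe_mk, OneHom.coe_mk]
          rw [← hhn]; group
        rw [this]; exact hn
    rw [hpre]
    exact hFN.preimage continuous_subtype_val
  have hsymm : Continuous φ.symm := by
    rw [continuous_iff_isClosed]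
    intro C hC
    have : ⇑φ.symm ⁻¹' C = φ₀ '' C := (φ.toEquiv.image_eq_preimage_symm C).symm
    rw [this]
    exact hclosedmap C hC
  exact ⟨φ, hφ₀cont, hsymm, fun h => rfl⟩
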